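/- Let r, r̄ be complex numbers with r + r̄ = 5, let τ > 0 be a real number, and define τ^c = exp(c·ln τ) for complex c. Let a : ℕ×ℕ×ℕ → ℂ be such that the family ((k,l,m) ↦ a_{klm} τ^{k−2+rl+r̄m}) is summable. Define, for i, j ∈ ℕ, the finite sums a_{ij} = Σ_{k+5l=i} a_{k,l+j,l} and ā_{ij} = Σ_{k+5m=i} a_{k,m,m+j}. Then the families ((i,j) ↦ a_{ij} τ^{i−2+jr}) over ℕ×ℕ and ((i,j) ↦ ā_{ij} τ^{i−2+jr̄}) over ℕ×(ℕ∖{0}) are summable, and Σ_{(k,l,m)∈ℕ³} a_{klm} τ^{k−2+rl+r̄m} = Σ_{(i,j)∈ℕ×ℕ} a_{ij} τ^{i−2+jr} + Σ_{(i,j)∈ℕ×(ℕ∖{0})} ā_{ij} τ^{i−2+jr̄}. -/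

import Mathlib

set_option maxHeartbeats 1000000

private def fibB (i : ℕ) : Finset ℕ := (Finset.range (i + 1)).filter (fun l => 5 * l ≤ i)

private lemma mem_fibB {i m : ℕ} : m ∈ fibB i ↔ 5 * m ≤ i := by
  simp only [fibB, Finset.mem_filter, Finset.mem_range]
  omega

private def SsetB : Set (ℕ × ℕ × ℕ) := {p | p.2.2 ≤ p.2.1}

/-- Equiv for the `l ≥ m` part. -/
private def EAB : (Σ p : ℕ × ℕ, {m // m ∈ fibB p.1}) ≃ ↥SsetB where
  toFun x := ⟨(x.1.1 - 5 * x.2.1, x.2.1 + x.1.2, x.2.1), Nat.le_add_right _ _⟩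
  invFun q := ⟨(q.1.1 + 5 * q.1.2.2, q.1.2.1 - q.1.2.2),
    ⟨q.1.2.2, mem_fibB.2 (by omega)⟩⟩
  left_inv := by
    rintro ⟨⟨i, j⟩, m, hm⟩
    have h5 : 5 * m ≤ i := mem_fibB.1 hm
    exact Sigma.subtype_ext (by simp only [Prod.mk.injEq]; omega) rfl
  right_inv := by
    rintro ⟨⟨k, l, m⟩, h⟩
    have h' : m ≤ l := h
    apply Subtype.ext
    simp only [Prod.mk.injEq]
    exact ⟨by omega, by omega, trivial⟩

/-- Equiv for the `l < m` part. -/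
private def EBB : (Σ p : ℕ × {j : ℕ // j ≠ 0}, {l // l ∈ fibB p.1}) ≃ ↥(SsetBᶜ) where
  toFun x := ⟨(x.1.1 - 5 * x.2.1, x.2.1, x.2.1 + x.1.2.1),
    by have := x.1.2.2; simp only [SsetB, Set.mem_compl_iff, Set.mem_setOf_eq]; omega⟩
  invFun q := ⟨(q.1.1 + 5 * q.1.2.1, ⟨q.1.2.2 - q.1.2.1,
      by have : ¬ q.1.2.2 ≤ q.1.2.1 := q.2; omega⟩),
    ⟨q.1.2.1, mem_fibB.2 (by omega)⟩⟩
  left_inv := by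
    rintro ⟨⟨i, j, hj⟩, l, hl⟩
    have h5 : 5 * l ≤ i := mem_fibB.1 hl
    refine Sigma.subtype_ext ?_ rfl
    simp only [Prod.mk.injEq, Subtype.mk.injEq]
    omega
  right_inv := by
    rintro ⟨⟨k, l, m⟩, h⟩
    have h' : ¬ m ≤ l := h
    apply Subtype.ext
    simp only [Prod.mk.injEq]
    exact ⟨by omega, trivial, by omega⟩

theorem resummation_B (r rbar : ℂ) (hr : r + rbar = 5) (τ : ℝ) (hτ : 0 < τ)
    (a : ℕ × ℕ × ℕ → ℂ) (A Abar : ℕ → ℕ → ℂ)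
    (hA : ∀ i j : ℕ, A i j =
      ∑ l ∈ (Finset.range (i + 1)).filter (fun l => 5 * l ≤ i), a (i - 5 * l, l + j, l))
    (hAbar : ∀ i j : ℕ, Abar i j =
      ∑ m ∈ (Finset.range (i + 1)).filter (fun m => 5 * m ≤ i), a (i - 5 * m, m, m + j))
    (hsum : Summable (fun p : ℕ × ℕ × ℕ =>
      a p * Complex.exp (((p.1 : ℂ) - 2 + r * (p.2.1 : ℂ) + rbar * (p.2.2 : ℂ)) *
        (Real.log τ : ℂ)))) :
    Summable (fun p : ℕ × ℕ =>
        A p.1 p.2 * Complex.exp (((p.1 : ℂ) - 2 + r * (p.2 : ℂ)) * (Real.log τ : ℂ))) ∧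
    Summable (fun p : ℕ × {j : ℕ // j ≠ 0} =>
        Abar p.1 (p.2 : ℕ) *
          Complex.exp (((p.1 : ℂ) - 2 + rbar * ((p.2 : ℕ) : ℂ)) * (Real.log τ : ℂ))) ∧
    ∑' p : ℕ × ℕ × ℕ,
        a p * Complex.exp (((p.1 : ℂ) - 2 + r * (p.2.1 : ℂ) + rbar * (p.2.2 : ℂ)) *
          (Real.log τ : ℂ)) =
      (∑' p : ℕ × ℕ,
        A p.1 p.2 * Complex.exp (((p.1 : ℂ) - 2 + r * (p.2 : ℂ)) * (Real.log τ : ℂ))) +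
      ∑' p : ℕ × {j : ℕ // j ≠ 0},
        Abar p.1 (p.2 : ℕ) *
          Complex.exp (((p.1 : ℂ) - 2 + rbar * ((p.2 : ℕ) : ℂ)) * (Real.log τ : ℂ)) := by
  classical
  set L : ℂ := (Real.log τ : ℂ) with hL
  set f : ℕ × ℕ × ℕ → ℂ := fun p =>
    a p * Complex.exp (((p.1 : ℂ) - 2 + r * (p.2.1 : ℂ) + rbar * (p.2.2 : ℂ)) * L) with hf
  have expA : ∀ i j m : ℕ, 5 * m ≤ i →
      (((i - 5 * m : ℕ) : ℂ) - 2 + r * ((m + j : ℕ) : ℂ) + rbar * (m : ℂ))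
        = ((i : ℂ) - 2 + r * (j : ℂ)) := by
    intro i j m h
    rw [Nat.cast_sub h]
    push_cast
    linear_combination (m : ℂ) * hr
  have expB : ∀ i j m : ℕ, 5 * m ≤ i →
      (((i - 5 * m : ℕ) : ℂ) - 2 + r * (m : ℂ) + rbar * ((m + j : ℕ) : ℂ))
        = ((i : ℂ) - 2 + rbar * (j : ℂ)) := by
    intro i j m h
    rw [Nat.cast_sub h]
    push_cast
    linear_combination (m : ℂ) * hr
  have hsumf : Summable f := hsum
  have hS : Summable (fun x : SsetB => f ↑x) := hsumf.subtype _
  have hSc : Summable (fun x : ↥(SsetBᶜ) => f ↑x) := hsumf.subtype _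
  have hGA : Summable (fun x : Σ p : ℕ × ℕ, {m // m ∈ fibB p.1} =>
      (fun x : SsetB => f ↑x) (EAB x)) :=
    (EAB.summable_iff (f := (fun x : SsetB => f ↑x))).2 hS
  have hGB : Summable (fun x : Σ p : ℕ × {j : ℕ // j ≠ 0}, {l // l ∈ fibB p.1} =>
      (fun x : ↥(SsetBᶜ) => f ↑x) (EBB x)) :=
    (EBB.summable_iff (f := (fun x : ↥(SsetBᶜ) => f ↑x))).2 hSc
  -- fiberwise sums, A side
  have fibA_eq : ∀ p : ℕ × ℕ,
      (∑' c : {m // m ∈ fibB p.1}, (fun x : SsetB => f ↑x) (EAB ⟨p, c⟩))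
      = A p.1 p.2 * Complex.exp (((p.1 : ℂ) - 2 + r * (p.2 : ℂ)) * L) := by
    rintro ⟨i, j⟩
    have step : ∀ c : {m // m ∈ fibB i},
        (fun x : SsetB => f ↑x) (EAB ⟨(i, j), c⟩)
          = a (i - 5 * (c : ℕ), (c : ℕ) + j, (c : ℕ)) *
              Complex.exp (((i : ℂ) - 2 + r * (j : ℂ)) * L) := by
      rintro ⟨m, hm⟩
      simp only [EAB, Equiv.coe_fn_mk, hf]
      rw [expA i j m (mem_fibB.1 hm)]
    rw [tsum_congr step, tsum_fintype, Finset.sum_coe_sort (fibB i)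
      (fun m => a (i - 5 * m, m + j, m) * Complex.exp (((i : ℂ) - 2 + r * (j : ℂ)) * L)),
      ← Finset.sum_mul, hA i j]
    rfl
  -- fiberwise sums, B side
  have fibB_eq : ∀ p : ℕ × {j : ℕ // j ≠ 0},
      (∑' c : {l // l ∈ fibB p.1}, (fun x : ↥(SsetBᶜ) => f ↑x) (EBB ⟨p, c⟩))
      = Abar p.1 (p.2 : ℕ) *
          Complex.exp (((p.1 : ℂ) - 2 + rbar * ((p.2 : ℕ) : ℂ)) * L) := by
    rintro ⟨i, j⟩
    have step : ∀ c : {l // l ∈ fibB i},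
        (fun x : ↥(SsetBᶜ) => f ↑x) (EBB ⟨(i, j), c⟩)
          = a (i - 5 * (c : ℕ), (c : ℕ), (c : ℕ) + (j : ℕ)) *
              Complex.exp (((i : ℂ) - 2 + rbar * ((j : ℕ) : ℂ)) * L) := by
      rintro ⟨l, hl⟩
      simp only [EBB, Equiv.coe_fn_mk, hf]
      rw [expB i (j : ℕ) l (mem_fibB.1 hl)]
    rw [tsum_congr step, tsum_fintype, Finset.sum_coe_sort (fibB i)
      (fun l => a (i - 5 * l, l, l + (j : ℕ)) *
        Complex.exp (((i : ℂ) - 2 + rbar * ((j : ℕ) : ℂ)) * L)),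
      ← Finset.sum_mul, hAbar i (j : ℕ)]
    rfl
  have sumA : Summable (fun p : ℕ × ℕ =>
      A p.1 p.2 * Complex.exp (((p.1 : ℂ) - 2 + r * (p.2 : ℂ)) * L)) :=
    hGA.sigma.congr fibA_eq
  have sumB : Summable (fun p : ℕ × {j : ℕ // j ≠ 0} =>
      Abar p.1 (p.2 : ℕ) *
        Complex.exp (((p.1 : ℂ) - 2 + rbar * ((p.2 : ℕ) : ℂ)) * L)) :=
    hGB.sigma.congr fibB_eq
  refine ⟨sumA, sumB, ?_⟩
  have h1 : (∑' x : SsetB, f x)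
      = ∑' p : ℕ × ℕ, A p.1 p.2 * Complex.exp (((p.1 : ℂ) - 2 + r * (p.2 : ℂ)) * L) := by
    rw [← EAB.tsum_eq (fun x : SsetB => f ↑x), Summable.tsum_sigma hGA]
    exact tsum_congr fibA_eq
  have h2 : (∑' x : ↥(SsetBᶜ), f x)
      = ∑' p : ℕ × {j : ℕ // j ≠ 0}, Abar p.1 (p.2 : ℕ) *
          Complex.exp (((p.1 : ℂ) - 2 + rbar * ((p.2 : ℕ) : ℂ)) * L) := by
    rw [← EBB.tsum_eq (fun x : ↥(SsetBᶜ) => f ↑x), Summable.tsum_sigma hGB]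
    exact tsum_congr fibB_eq
  rw [← Summable.tsum_add_tsum_compl (s := SsetB) (f := f) hS hSc, h1, h2]
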